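/- In the merge fluid queue setting, set q3up = θ − c3min/w. For every mode i ∈ I and every q1 ≥ 0, q2 ≥ 0 with q1 + q2 > 0, f13(i, (q1, q2, q3up)) + f23(i, (q1, q2, q3up)) ≤ f3(i, (q1, q2, q3up)); equivalently, the downstream drift f13 + f23 − f3 is nonpositive on the upper q3-boundary. In particular f13 + f23 ≤ w·(θ − q3up) = c3min and min(v·q3up, c3(i)) ≥ c3min. -/

import Mathlib

/-- Upper boundary inequality in the proof of Proposition 2 (merge fluid queue):
on the upper `q3`-boundary `q3 = q3up = θ - c3min/w`, the downstream drift
`f13 + f23 - f3` is nonpositive; in particular `f13 + f23 ≤ w·(θ - q3up) = c3min`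
and `min (v·q3up) (c3 i) ≥ c3min`. -/
theorem merge_upper_q3_boundary
    {I : Type*} [Fintype I] [Nonempty I]
    (v w θ : ℝ) (hv : 0 < v) (hw : 0 < w) (hθ : 0 < θ)
    (c1 c2 c3 : I → ℝ)
    (hc1 : ∀ i, 0 < c1 i) (hc2 : ∀ i, 0 < c2 i) (hc3 : ∀ i, 0 < c3 i)
    (cmax c3min : ℝ)
    (hcmax : cmax = Finset.univ.sup' Finset.univ_nonempty
      (fun i => max (c1 i) (max (c2 i) (c3 i))))
    (hc3min : c3min = Finset.univ.inf' Finset.univ_nonempty c3)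
    (hcap : cmax ≤ v * w * θ / (v + w))
    (q3up : ℝ) (hq3up : q3up = θ - c3min / w) :
    ∀ (i : I) (q1 q2 : ℝ), 0 ≤ q1 → 0 ≤ q2 → 0 < q1 + q2 →
      (min (v * q1) (min (q1 / (q1 + q2) * (w * (θ - q3up))) (c1 i))
          + min (v * q2) (min (q2 / (q1 + q2) * (w * (θ - q3up))) (c2 i))
        ≤ min (v * q3up) (c3 i)) ∧
      (min (v * q1) (min (q1 / (q1 + q2) * (w * (θ - q3up))) (c1 i))
          + min (v * q2) (min (q2 / (q1 + q2) * (w * (θ - q3up))) (c2 i))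
        ≤ w * (θ - q3up)) ∧
      w * (θ - q3up) = c3min ∧
      c3min ≤ min (v * q3up) (c3 i) := by
  intro i q1 q2 hq1 hq2 hsum
  have hwθ : w * (θ - q3up) = c3min := by
    rw [hq3up]; field_simp; ring
  -- c3min positive, c3min ≤ c3 i, c3min ≤ cmax
  have hle3 : c3min ≤ c3 i := hc3min ▸ Finset.inf'_le _ (Finset.mem_univ i)
  have hpos : 0 < c3min := by
    rw [hc3min]
    exact (Finset.lt_inf'_iff _).2 fun j _ => hc3 j
  have hcmax' : c3min ≤ cmax := by
    have h1 : c3 i ≤ cmax := by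
      rw [hcmax]
      exact le_trans (le_max_of_le_right (le_max_right (c2 i) (c3 i)))
        (Finset.le_sup' (fun i => max (c1 i) (max (c2 i) (c3 i))) (Finset.mem_univ i))
    exact hle3.trans h1
  have hcap' : c3min ≤ v * w * θ / (v + w) := hcmax'.trans hcap
  have hvq3 : c3min ≤ v * q3up := by
    rw [hq3up]
    have hvw : 0 < v + w := by linarith
    rw [le_div_iff₀ hvw] at hcap'
    have heq : v * (θ - c3min / w) = (v * w * θ - v * c3min) / w := by
      field_simp
    rw [heq, le_div_iff₀ hw]
    nlinarith
  have hmin3 : c3min ≤ min (v * q3up) (c3 i) := le_min hvq3 hle3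
  -- sum bound
  have hsum' : min (v * q1) (min (q1 / (q1 + q2) * (w * (θ - q3up))) (c1 i))
      + min (v * q2) (min (q2 / (q1 + q2) * (w * (θ - q3up))) (c2 i))
      ≤ w * (θ - q3up) := by
    have h1 : min (v * q1) (min (q1 / (q1 + q2) * (w * (θ - q3up))) (c1 i))
        ≤ q1 / (q1 + q2) * (w * (θ - q3up)) :=
      le_trans (min_le_right _ _) (min_le_left _ _)
    have h2 : min (v * q2) (min (q2 / (q1 + q2) * (w * (θ - q3up))) (c2 i))
        ≤ q2 / (q1 + q2) * (w * (θ - q3up)) :=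
      le_trans (min_le_right _ _) (min_le_left _ _)
    have : q1 / (q1 + q2) * (w * (θ - q3up)) + q2 / (q1 + q2) * (w * (θ - q3up))
        = w * (θ - q3up) := by
      field_simp
    linarith
  refine ⟨hsum'.trans (hwθ ▸ hmin3), hsum', hwθ, hmin3⟩
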